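/- Let (Σ,d) be a metric space and equip Σ×ℝ with the Lorentzian metric product structure. Then the time separation τ : (Σ×ℝ)×(Σ×ℝ) → ℝ is continuous with respect to the product topology (in particular lower semicontinuous), τ(p,q) > 0 if and only if p ≪ q, and the chronological relation {(p,q) : p ≪ q} is an open subset of (Σ×ℝ)×(Σ×ℝ); consequently I⁺(p) = {q : p ≪ q} and I⁻(p) = {q : q ≪ p} are open for every p. -/

import Mathlib

open Topology Filter Set

noncomputable section

namespace BSC

variable {X : Type*}

/-! ## Basic chronology from a time separation -/

/-- The chronological relation induced by a time separation `τ`. -/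
def chron (τ : X → X → ENNReal) (x y : X) : Prop := 0 < τ x y

/-- The chronological past of a set. -/
def Iminus (τ : X → X → ENNReal) (S : Set X) : Set X := {y | ∃ x ∈ S, chron τ y x}

/-- The chronological future of a set. -/
def Iplus (τ : X → X → ENNReal) (S : Set X) : Set X := {y | ∃ x ∈ S, chron τ x y}

/-- A past set: `I⁻(S) = S`. -/
def IsPastSet (τ : X → X → ENNReal) (S : Set X) : Prop := Iminus τ S = S

/-- An indecomposable past set: a nonempty past set which is not the union of two past
sets properly contained in it. -/
def IsIP (τ : X → X → ENNReal) (S : Set X) : Prop :=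
  S.Nonempty ∧ IsPastSet τ S ∧
    ¬ ∃ A B : Set X, IsPastSet τ A ∧ IsPastSet τ B ∧ A ⊂ S ∧ B ⊂ S ∧ A ∪ B = S

/-- A terminal indecomposable past set: an IP which is not of the form `I⁻(x)`.
The future causal boundary is the set of TIPs. -/
def IsTIP (τ : X → X → ENNReal) (S : Set X) : Prop :=
  IsIP τ S ∧ ∀ x : X, S ≠ Iminus τ {x}

/-- A future chronological chain. -/
def FutureChain (τ : X → X → ENNReal) (c : ℕ → X) : Prop := ∀ n, chron τ (c n) (c (n + 1))

/-- A future causal chain with respect to a causal relation. -/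
def FutureCausalChain (le : X → X → Prop) (c : ℕ → X) : Prop := ∀ n, le (c n) (c (n + 1))

/-! ## Lorentzian metric spaces -/

/-- A Lorentzian metric space structure on a topological space `X`. -/
structure LorentzianMetric (X : Type*) [TopologicalSpace X] where
  tau : X → X → ENNReal
  lsc : LowerSemicontinuous fun p : X × X => tau p.1 p.2
  rev_tri : ∀ x y z, 0 < tau x y → 0 < tau y z → tau x y + tau y z ≤ tau x z

/-- A compatible causal relation on a Lorentzian metric space. -/
structure CompatibleCausal [TopologicalSpace X] (L : LorentzianMetric X) where
  rel : X → X → Prop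
  refl : ∀ x, rel x x
  trans : ∀ x y z, rel x y → rel y z → rel x z
  chron_sub : ∀ x y, 0 < L.tau x y → rel x y
  rev_tri : ∀ x y z, rel x y → rel y z → L.tau x y + L.tau y z ≤ L.tau x z

/-- Chronological density. -/
def ChronDense [TopologicalSpace X] (τ : X → X → ENNReal) : Prop :=
  (∀ x : X, (Iminus τ {x}).Nonempty →
    ∃ c : ℕ → X, FutureChain τ c ∧ (∀ n, chron τ (c n) x) ∧ Tendsto c atTop (𝓝 x)) ∧
  (∀ x : X, (Iplus τ {x}).Nonempty →
    ∃ c : ℕ → X, (∀ n, chron τ (c (n + 1)) (c n)) ∧ (∀ n, chron τ x (c n)) ∧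
      Tendsto c atTop (𝓝 x))

/-- Distinguishing. -/
def Distinguishing (τ : X → X → ENNReal) : Prop :=
  (∀ x y : X, Iminus τ {x} = Iminus τ {y} → x = y) ∧
  (∀ x y : X, Iplus τ {x} = Iplus τ {y} → x = y)

/-- The Alexandrov topology generated by the chronological diamonds. -/
def AlexandrovTopology (τ : X → X → ENNReal) : TopologicalSpace X :=
  TopologicalSpace.generateFrom {s | ∃ p q : X, s = Iplus τ {p} ∩ Iminus τ {q}}

/-- Strong causality: distinguishing plus the topology is the Alexandrov topology. -/
def StronglyCausal [t : TopologicalSpace X] (τ : X → X → ENNReal) : Prop :=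
  Distinguishing τ ∧ t = AlexandrovTopology τ

/-- Causal simplicity with respect to a causal relation `le`. -/
def CausallySimple [TopologicalSpace X] (τ : X → X → ENNReal) (le : X → X → Prop) : Prop :=
  StronglyCausal τ ∧ (∀ x : X, closure (Iplus τ {x}) = {y | le x y}) ∧
    (∀ x : X, closure (Iminus τ {x}) = {y | le y x})

/-! ## τ-length of curves -/

/-- The `τ`-length of the restriction of a curve `γ` to `[a,b]`: the infimum over all
partitions `a = t 0 ≤ t 1 ≤ ⋯ ≤ t n = b` of the sums of the time separations of
consecutive points. -/
def tauLength (τ : X → X → ENNReal) (γ : ℝ → X) (a b : ℝ) : ENNReal :=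
  ⨅ (n : ℕ) (t : ℕ → ℝ) (_ : t 0 = a) (_ : t n = b) (_ : ∀ i < n, t i ≤ t (i + 1)),
    ∑ i ∈ Finset.range n, τ (γ (t i)) (γ (t (i + 1)))

/-- The total `τ`-length of a curve defined on a set `I ⊆ ℝ`: the supremum of the
`τ`-lengths of its restrictions to compact subintervals. -/
def tauLengthOn (τ : X → X → ENNReal) (γ : ℝ → X) (I : Set ℝ) : ENNReal :=
  ⨆ (a : ℝ) (b : ℝ) (_ : a ∈ I) (_ : b ∈ I) (_ : a ≤ b), tauLength τ γ a b

/-! ## Lorentzian pre-length spaces -/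

/-- A Lorentzian pre-length space structure on a metric space `X`. -/
structure LorPreLength (X : Type*) [MetricSpace X] where
  tau : X → X → ENNReal
  chron : X → X → Prop
  causal : X → X → Prop
  causal_refl : ∀ x, causal x x
  causal_trans : ∀ x y z, causal x y → causal y z → causal x z
  chron_trans : ∀ x y z, chron x y → chron y z → chron x z
  chron_le_causal : ∀ x y, chron x y → causal x y
  lsc : LowerSemicontinuous fun p : X × X => tau p.1 p.2
  rev_tri : ∀ x y z, causal x y → causal y z → tau x y + tau y z ≤ tau x z
  pos_iff : ∀ x y, 0 < tau x y ↔ chron x y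

variable [MetricSpace X]

/-- Locally Lipschitz on a subset of `ℝ`. -/
def LocallyLipschitzOnSet (γ : ℝ → X) (I : Set ℝ) : Prop :=
  ∀ t ∈ I, ∃ K : NNReal, ∃ s ∈ 𝓝[I] t, LipschitzOnWith K γ s

/-- A future-directed causal curve on `I`. -/
def IsCausalCurveOn (L : LorPreLength X) (γ : ℝ → X) (I : Set ℝ) : Prop :=
  (∃ s ∈ I, ∃ t ∈ I, γ s ≠ γ t) ∧ LocallyLipschitzOnSet γ I ∧
    ∀ s ∈ I, ∀ t ∈ I, s < t → L.causal (γ s) (γ t)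

/-- A future-directed timelike curve on `I`. -/
def IsTimelikeCurveOn (L : LorPreLength X) (γ : ℝ → X) (I : Set ℝ) : Prop :=
  (∃ s ∈ I, ∃ t ∈ I, γ s ≠ γ t) ∧ LocallyLipschitzOnSet γ I ∧
    ∀ s ∈ I, ∀ t ∈ I, s < t → L.chron (γ s) (γ t)

/-- A future-directed null curve on `I`: causal with no two points chronologically related. -/
def IsNullCurveOn (L : LorPreLength X) (γ : ℝ → X) (I : Set ℝ) : Prop :=
  IsCausalCurveOn L γ I ∧ ∀ s ∈ I, ∀ t ∈ I, s < t → ¬ L.chron (γ s) (γ t)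

/-- A timelike distance realizer from `p` to `q`, parametrised on `[a,b]`. -/
def IsTimelikeRealizer (L : LorPreLength X) (γ : ℝ → X) (a b : ℝ) (p q : X) : Prop :=
  a < b ∧ γ a = p ∧ γ b = q ∧ IsTimelikeCurveOn L γ (Set.Icc a b) ∧
    L.tau p q = tauLength L.tau γ a b

/-- A timelike geodesic on `I`: locally a distance realizer. -/
def IsTimelikeGeodesicOn (L : LorPreLength X) (γ : ℝ → X) (I : Set ℝ) : Prop :=
  IsTimelikeCurveOn L γ I ∧
    ∀ t ∈ I, ∃ a b : ℝ, a ≤ t ∧ t ≤ b ∧ Set.Icc a b ⊆ I ∧ Set.Icc a b ∈ 𝓝[I] t ∧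
      L.tau (γ a) (γ b) = tauLength L.tau γ a b

/-- Inextendibility for a curve defined on all of `ℝ`: no future or past endpoint. -/
def Inextendible (γ : ℝ → X) : Prop :=
  (¬ ∃ p : X, Tendsto γ atTop (𝓝 p)) ∧ (¬ ∃ p : X, Tendsto γ atBot (𝓝 p))

/-! ## Lorentzian length spaces -/

/-- Locally causally closed. -/
def LocallyCausallyClosed (L : LorPreLength X) : Prop :=
  ∀ x : X, ∃ U ∈ 𝓝 x, ∀ (p q : ℕ → X) (p₀ q₀ : X), (∀ n, p n ∈ U) → (∀ n, q n ∈ U) →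
    p₀ ∈ U → q₀ ∈ U → Tendsto p atTop (𝓝 p₀) → Tendsto q atTop (𝓝 q₀) →
    (∀ n, L.causal (p n) (q n)) → L.causal p₀ q₀

/-- Causally path connected. -/
def CausallyPathConnected (L : LorPreLength X) : Prop :=
  (∀ x y, L.chron x y → ∃ (γ : ℝ → X) (a b : ℝ), a < b ∧ γ a = x ∧ γ b = y ∧
    IsTimelikeCurveOn L γ (Set.Icc a b)) ∧
  (∀ x y, L.causal x y → x ≠ y → ∃ (γ : ℝ → X) (a b : ℝ), a < b ∧ γ a = x ∧ γ b = y ∧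
    IsCausalCurveOn L γ (Set.Icc a b))

/-- `Ω` is a localising neighbourhood of `x`. -/
def IsLocalisingNbhd (L : LorPreLength X) (x : X) (Ω : Set X) : Prop :=
  IsOpen Ω ∧ x ∈ Ω ∧
  (∃ C : ENNReal, C ≠ ⊤ ∧ ∀ (γ : ℝ → X) (a b : ℝ), a < b →
    IsCausalCurveOn L γ (Set.Icc a b) → (∀ t ∈ Set.Icc a b, γ t ∈ Ω) →
    eVariationOn γ (Set.Icc a b) ≤ C) ∧
  (∀ y ∈ Ω, (Iplus L.tau {y} ∩ Ω).Nonempty ∧ (Iminus L.tau {y} ∩ Ω).Nonempty) ∧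
  ∃ ω : X → X → ENNReal,
    (∀ p ∈ Ω, ∀ q ∈ Ω, ω p q ≠ ⊤) ∧
    LowerSemicontinuousOn (fun pq : X × X => ω pq.1 pq.2) (Ω ×ˢ Ω) ∧
    (∀ p ∈ Ω, ∀ q ∈ Ω, ∀ r ∈ Ω, L.causal p q → L.causal q r → ω p q + ω q r ≤ ω p r) ∧
    (∀ p ∈ Ω, ∀ q ∈ Ω, (0 < ω p q ↔ L.chron p q)) ∧
    (∀ p ∈ Ω, ∀ q ∈ Ω, L.causal p q → p ≠ q →
      ∃ (γ : ℝ → X) (a b : ℝ), a < b ∧ γ a = p ∧ γ b = q ∧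
        IsCausalCurveOn L γ (Set.Icc a b) ∧ (∀ t ∈ Set.Icc a b, γ t ∈ Ω) ∧
        tauLength L.tau γ a b = ω p q ∧
        ∀ (γ' : ℝ → X) (a' b' : ℝ), a' < b' → γ' a' = p → γ' b' = q →
          IsCausalCurveOn L γ' (Set.Icc a' b') → (∀ t ∈ Set.Icc a' b', γ' t ∈ Ω) →
          tauLength L.tau γ' a' b' ≤ tauLength L.tau γ a b)

/-- `Ω` is a regular localising neighbourhood of `x`. -/
def IsRegularLocalisingNbhd (L : LorPreLength X) (x : X) (Ω : Set X) : Prop :=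
  IsLocalisingNbhd L x Ω ∧
  ∀ p ∈ Ω, ∀ q ∈ Ω, L.chron p q →
    ∃ (γ : ℝ → X) (a b : ℝ), a < b ∧ γ a = p ∧ γ b = q ∧
      IsTimelikeCurveOn L γ (Set.Icc a b) ∧ (∀ t ∈ Set.Icc a b, γ t ∈ Ω) ∧
      (∀ (γ' : ℝ → X) (a' b' : ℝ), a' < b' → γ' a' = p → γ' b' = q →
        IsCausalCurveOn L γ' (Set.Icc a' b') → (∀ t ∈ Set.Icc a' b', γ' t ∈ Ω) →
        tauLength L.tau γ' a' b' ≤ tauLength L.tau γ a b) ∧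
      (∀ (γ' : ℝ → X) (a' b' : ℝ), a' < b' → γ' a' = p → γ' b' = q →
        IsCausalCurveOn L γ' (Set.Icc a' b') → (∀ t ∈ Set.Icc a' b', γ' t ∈ Ω) →
        (∃ c d : ℝ, a' ≤ c ∧ c < d ∧ d ≤ b' ∧
          ∀ s ∈ Set.Icc c d, ∀ t ∈ Set.Icc c d, s < t → ¬ L.chron (γ' s) (γ' t)) →
        tauLength L.tau γ' a' b' < tauLength L.tau γ a b)

def Localisable (L : LorPreLength X) : Prop := ∀ x : X, ∃ Ω, IsLocalisingNbhd L x Ω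

def RegularlyLocalisable (L : LorPreLength X) : Prop :=
  ∀ x : X, ∃ Ω, IsRegularLocalisingNbhd L x Ω

/-- `X` is a Lorentzian length space. -/
def IsLorLengthSpace (L : LorPreLength X) : Prop :=
  LocallyCausallyClosed L ∧ CausallyPathConnected L ∧ Localisable L ∧
    ∀ x y, L.causal x y → x ≠ y →
      L.tau x y = ⨆ (γ : ℝ → X) (a : ℝ) (b : ℝ) (_ : a < b) (_ : γ a = x) (_ : γ b = y)
        (_ : IsCausalCurveOn L γ (Set.Icc a b)), tauLength L.tau γ a b

/-- Strong causality for pre-length spaces: the metric topology is generated by the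
chronological diamonds. -/
def PLSStronglyCausal (L : LorPreLength X) : Prop :=
  (inferInstance : TopologicalSpace X) = TopologicalSpace.generateFrom
    {s : Set X | ∃ p q : X, s = {z | L.chron p z} ∩ {z | L.chron z q}}

/-- Global hyperbolicity for pre-length spaces. -/
def GloballyHyperbolic (L : LorPreLength X) : Prop :=
  PLSStronglyCausal L ∧ ∀ x y : X, IsCompact {z : X | L.causal x z ∧ L.causal z y}

/-- Timelike geodesic connectedness: chronologically related points are joined by
timelike distance realizers. -/
def TimelikeGeodConnected (L : LorPreLength X) : Prop :=
  ∀ x y, L.chron x y → ∃ (γ : ℝ → X) (a b : ℝ), IsTimelikeRealizer L γ a b x y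

/-- Timelike geodesic prolongation. -/
def TimelikeGeodesicProlongation (L : LorPreLength X) : Prop :=
  ∀ (γ : ℝ → X) (a b : ℝ), a < b → IsTimelikeCurveOn L γ (Set.Icc a b) →
    L.tau (γ a) (γ b) = tauLength L.tau γ a b →
    ∃ ε > (0 : ℝ), ∃ γ' : ℝ → X, (∀ t ∈ Set.Icc a b, γ' t = γ t) ∧
      IsTimelikeGeodesicOn L γ' (Set.Ioo (a - ε) (b + ε))

/-! ## The Minkowski plane 𝕃² (first coordinate = time) -/

def mCausal (p q : ℝ × ℝ) : Prop := |q.2 - p.2| ≤ q.1 - p.1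
def mChron (p q : ℝ × ℝ) : Prop := |q.2 - p.2| < q.1 - p.1

open Classical in
/-- The time separation of the Minkowski plane. -/
def mTau (p q : ℝ × ℝ) : ℝ :=
  if mCausal p q then Real.sqrt ((q.1 - p.1) ^ 2 - (q.2 - p.2) ^ 2) else 0

/-- The Minkowski bilinear form on `ℝ²` (first coordinate = time). -/
def mForm (u v : ℝ × ℝ) : ℝ := -(u.1 * v.1) + u.2 * v.2

/-- The Lorentzian norm of a timelike vector. -/
def mNorm (u : ℝ × ℝ) : ℝ := Real.sqrt (-(mForm u u))

/-! ## Curvature bounds -/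

/-- `x` lies on the side `γ` (from `pi` to `pj`, parametrised on `[a,b]`) of a timelike
geodesic triangle, with corresponding point `xb` on the comparison side from `qi` to `qj`. -/
def OnSideCorresp (L : LorPreLength X) (γ : ℝ → X) (a b : ℝ) (pi pj : X)
    (qi qj : ℝ × ℝ) (x : X) (xb : ℝ × ℝ) : Prop :=
  (∃ t ∈ Set.Icc a b, γ t = x) ∧
  (∃ s ∈ Set.Icc (0 : ℝ) 1, xb = qi + s • (qj - qi)) ∧
  ENNReal.ofReal (mTau qi xb) = L.tau pi x ∧ ENNReal.ofReal (mTau xb qj) = L.tau x pj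

/-- A point of a timelike geodesic triangle together with its corresponding point
in a comparison triangle in `𝕃²`: the pair lies on one of the three sides. -/
def PointOnTriangle (L : LorPreLength X) (γ₁₂ γ₂₃ γ₁₃ : ℝ → X)
    (a₁₂ b₁₂ a₂₃ b₂₃ a₁₃ b₁₃ : ℝ) (p₁ p₂ p₃ : X) (q₁ q₂ q₃ : ℝ × ℝ)
    (x : X) (xb : ℝ × ℝ) : Prop :=
  OnSideCorresp L γ₁₂ a₁₂ b₁₂ p₁ p₂ q₁ q₂ x xb ∨
  OnSideCorresp L γ₂₃ a₂₃ b₂₃ p₂ p₃ q₂ q₃ x xb ∨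
  OnSideCorresp L γ₁₃ a₁₃ b₁₃ p₁ p₃ q₁ q₃ x xb

/-- Global timelike curvature bounded below by `0`: for any timelike geodesic triangle,
any comparison triangle in `𝕃²`, and any pair of points on the sides with their
corresponding points, `τ(x,y) ≤ τ̄(x̄,ȳ)`. -/
def CurvBoundedBelowZero (L : LorPreLength X) : Prop :=
  ∀ (p₁ p₂ p₃ : X), L.chron p₁ p₂ → L.chron p₂ p₃ →
  ∀ (γ₁₂ γ₂₃ γ₁₃ : ℝ → X) (a₁₂ b₁₂ a₂₃ b₂₃ a₁₃ b₁₃ : ℝ),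
    IsTimelikeRealizer L γ₁₂ a₁₂ b₁₂ p₁ p₂ →
    IsTimelikeRealizer L γ₂₃ a₂₃ b₂₃ p₂ p₃ →
    IsTimelikeRealizer L γ₁₃ a₁₃ b₁₃ p₁ p₃ →
  ∀ (q₁ q₂ q₃ : ℝ × ℝ), mChron q₁ q₂ → mChron q₂ q₃ →
    ENNReal.ofReal (mTau q₁ q₂) = L.tau p₁ p₂ →
    ENNReal.ofReal (mTau q₂ q₃) = L.tau p₂ p₃ →
    ENNReal.ofReal (mTau q₁ q₃) = L.tau p₁ p₃ →
  ∀ (x y : X) (xb yb : ℝ × ℝ),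
    PointOnTriangle L γ₁₂ γ₂₃ γ₁₃ a₁₂ b₁₂ a₂₃ b₂₃ a₁₃ b₁₃ p₁ p₂ p₃ q₁ q₂ q₃ x xb →
    PointOnTriangle L γ₁₂ γ₂₃ γ₁₃ a₁₂ b₁₂ a₂₃ b₂₃ a₁₃ b₁₃ p₁ p₂ p₃ q₁ q₂ q₃ y yb →
    L.tau x y ≤ ENNReal.ofReal (mTau xb yb)

/-! ## The Lorentzian metric product Σ × ℝ -/

section Product

variable {S : Type*} [MetricSpace S]

def prodCausal (p q : S × ℝ) : Prop := dist p.1 q.1 ≤ q.2 - p.2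
def prodChron (p q : S × ℝ) : Prop := dist p.1 q.1 < q.2 - p.2

open Classical in
/-- The time separation of the Lorentzian metric product, real-valued. -/
def prodTauReal (p q : S × ℝ) : ℝ :=
  if prodCausal p q then Real.sqrt ((q.2 - p.2) ^ 2 - dist p.1 q.1 ^ 2) else 0

/-- The time separation of the Lorentzian metric product. -/
def prodTau (p q : S × ℝ) : ENNReal := ENNReal.ofReal (prodTauReal p q)

end Product

/-! ## Alexandrov geometry of metric spaces -/

/-- A unit-speed geodesic from `a` to `b`. -/
def UnitSpeedGeodesic {S : Type*} [MetricSpace S] (γ : ℝ → S) (a b : S) : Prop :=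
  γ 0 = a ∧ γ (dist a b) = b ∧
    ∀ s ∈ Set.Icc (0 : ℝ) (dist a b), ∀ t ∈ Set.Icc (0 : ℝ) (dist a b),
      dist (γ s) (γ t) = |s - t|

/-- A strictly intrinsic (geodesic) metric space. -/
def StrictlyIntrinsic (S : Type*) [MetricSpace S] : Prop :=
  ∀ a b : S, ∃ γ : ℝ → S, UnitSpeedGeodesic γ a b

/-- Alexandrov curvature bounded below by `0`: distances between points on the sides of a
geodesic triangle dominate the corresponding distances in a Euclidean comparison triangle. -/
def AlexCurvNonneg (S : Type*) [MetricSpace S] : Prop :=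
  ∀ (a b c : S) (γab γac : ℝ → S), UnitSpeedGeodesic γab a b → UnitSpeedGeodesic γac a c →
  ∀ ab bb cb : EuclideanSpace ℝ (Fin 2),
    dist ab bb = dist a b → dist ab cb = dist a c → dist bb cb = dist b c →
  ∀ s ∈ Set.Icc (0 : ℝ) (dist a b), ∀ t ∈ Set.Icc (0 : ℝ) (dist a c),
  ∀ xb yb : EuclideanSpace ℝ (Fin 2),
    xb = ab + (s / dist a b) • (bb - ab) → yb = ab + (t / dist a c) • (cb - ab) →
    dist xb yb ≤ dist (γab s) (γac t)

end BSC

open BSC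

lemma prodTauReal_eq {S : Type*} [MetricSpace S] (p q : S × ℝ) :
    prodTauReal p q =
      Real.sqrt (max (q.2 - p.2 - dist p.1 q.1) 0 * max (q.2 - p.2 + dist p.1 q.1) 0) := by
  by_cases h : prodCausal p q
  · have hd : (0 : ℝ) ≤ dist p.1 q.1 := dist_nonneg
    have h1 : max (q.2 - p.2 - dist p.1 q.1) 0 = q.2 - p.2 - dist p.1 q.1 :=
      max_eq_left (by simpa [sub_nonneg, prodCausal] using h)
    have h2 : max (q.2 - p.2 + dist p.1 q.1) 0 = q.2 - p.2 + dist p.1 q.1 :=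
      max_eq_left (by have := h; unfold prodCausal at this; linarith)
    rw [prodTauReal, if_pos h, h1, h2]
    ring_nf
  · have h1 : max (q.2 - p.2 - dist p.1 q.1) 0 = 0 :=
      max_eq_right (by have := h; unfold prodCausal at this; push_neg at this; linarith)
    rw [prodTauReal, if_neg h, h1, zero_mul, Real.sqrt_zero]

lemma prodTauReal_continuous {S : Type*} [MetricSpace S] :
    Continuous (fun pq : (S × ℝ) × (S × ℝ) => prodTauReal pq.1 pq.2) := by
  have : (fun pq : (S × ℝ) × (S × ℝ) => prodTauReal pq.1 pq.2) =
      fun pq : (S × ℝ) × (S × ℝ) =>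
        Real.sqrt (max (pq.2.2 - pq.1.2 - dist pq.1.1 pq.2.1) 0 *
          max (pq.2.2 - pq.1.2 + dist pq.1.1 pq.2.1) 0) := by
    funext pq; exact prodTauReal_eq pq.1 pq.2
  rw [this]
  fun_prop

lemma prodTauReal_pos_iff {S : Type*} [MetricSpace S] (p q : S × ℝ) :
    0 < prodTauReal p q ↔ prodChron p q := by
  rw [prodTauReal_eq]
  rw [Real.sqrt_pos]
  constructor
  · intro h
    have h1 : 0 < max (q.2 - p.2 - dist p.1 q.1) 0 := by
      rcases mul_pos_iff.1 h with ⟨h1, _⟩ | ⟨_, h2⟩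
      · exact h1
      · exact absurd h2 (not_lt.2 (le_max_right _ _))
    have : 0 < q.2 - p.2 - dist p.1 q.1 := by
      rcases lt_max_iff.1 h1 with h | h
      · exact h
      · exact absurd h (lt_irrefl 0)
    unfold prodChron; linarith
  · intro h
    unfold prodChron at h
    have hd : (0 : ℝ) ≤ dist p.1 q.1 := dist_nonneg
    have h1 : 0 < max (q.2 - p.2 - dist p.1 q.1) 0 := lt_max_of_lt_left (by linarith)
    have h2 : 0 < max (q.2 - p.2 + dist p.1 q.1) 0 := lt_max_of_lt_left (by linarith)
    exact mul_pos h1 h2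

/-- the time separation of the Lorentzian metric product is continuous
(in particular lower semicontinuous), positive exactly on chronologically related pairs,
and the chronological relation is open (so `I⁺(p)` and `I⁻(p)` are open). -/
theorem prodTau_continuous {S : Type*} [MetricSpace S] :
    Continuous (fun pq : (S × ℝ) × (S × ℝ) => prodTauReal pq.1 pq.2) ∧
    LowerSemicontinuous (fun pq : (S × ℝ) × (S × ℝ) => prodTau pq.1 pq.2) ∧
    (∀ p q : S × ℝ, 0 < prodTauReal p q ↔ prodChron p q) ∧
    IsOpen {pq : (S × ℝ) × (S × ℝ) | prodChron pq.1 pq.2} ∧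
    (∀ p : S × ℝ, IsOpen {q : S × ℝ | prodChron p q} ∧
      IsOpen {q : S × ℝ | prodChron q p}) := by
  have hcont := prodTauReal_continuous (S := S)
  have hpos := prodTauReal_pos_iff (S := S)
  have hopen : IsOpen {pq : (S × ℝ) × (S × ℝ) | prodChron pq.1 pq.2} := by
    have : {pq : (S × ℝ) × (S × ℝ) | prodChron pq.1 pq.2} =
        (fun pq : (S × ℝ) × (S × ℝ) => prodTauReal pq.1 pq.2) ⁻¹' Set.Ioi 0 := by
      ext pq; simp [Set.mem_preimage, hpos]
    rw [this]
    exact isOpen_Ioi.preimage hcont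
  refine ⟨hcont, ?_, hpos, hopen, ?_⟩
  · exact (ENNReal.continuous_ofReal.comp hcont).lowerSemicontinuous
  · intro p
    constructor
    · have : {q : S × ℝ | prodChron p q} =
          (fun q : S × ℝ => ((p, q) : (S × ℝ) × (S × ℝ))) ⁻¹'
            {pq : (S × ℝ) × (S × ℝ) | prodChron pq.1 pq.2} := rfl
      rw [this]
      exact hopen.preimage (by fun_prop)
    · have : {q : S × ℝ | prodChron q p} =
          (fun q : S × ℝ => ((q, p) : (S × ℝ) × (S × ℝ))) ⁻¹'
            {pq : (S × ℝ) × (S × ℝ) | prodChron pq.1 pq.2} := rfl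
      rw [this]
      exact hopen.preimage (by fun_prop)
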